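/- Under the threshold service policy (T, μ_l, μ_h) with μ_l < μ_h, and a joining strategy with balking threshold n₀ < T, the generalized expected waiting time satisfies W(n, m) = (n+1)/μ_l for all 0 ≤ n < m ≤ n₀, where W(n,m) is the unique solution of the first-step equations W(0, n₀) = 1/μ_l, W(n, n₀) = 1/μ_l + W(n-1, n₀-1), W(0,m) = 1/(λp_m + μ_l) + (λp_m/(λp_m+μ_l))·W(0,m+1), and W(n,m) = 1/(λp_m+μ_l) + (λp_m/(λp_m+μ_l))·W(n,m+1) + (μ_l/(λp_m+μ_l))·W(n-1,m-1) for n+1 ≤ m ≤ n₀-1. -/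

import Mathlib

/-- Under the threshold service policy `(T, μ_l, μ_h)` and a joining
strategy `p` with balking threshold `n₀ < T`, the generalized expected waiting times,
solving the first-step equations with constant service rate `μ_l`, satisfy
`W n m = (n+1)/μ_l` for all `0 ≤ n < m ≤ n₀`. -/
theorem generalized_waiting_time_low_rate
    (lam μl μh : ℝ) (hlam : 0 < lam) (hμl : 0 < μl) (hμlh : μl < μh)
    (T n₀ : ℕ) (hn₀T : n₀ < T) (hn₀ : 1 ≤ n₀)
    (p : ℕ → ℝ) (hp : ∀ m, p m ∈ Set.Icc (0 : ℝ) 1)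
    (W : ℕ → ℕ → ℝ)
    (hW1 : W 0 n₀ = 1 / μl)
    (hW2 : ∀ n, 1 ≤ n → n ≤ n₀ - 1 → W n n₀ = 1 / μl + W (n - 1) (n₀ - 1))
    (hW3 : ∀ m, 1 ≤ m → m ≤ n₀ - 1 →
      W 0 m = 1 / (lam * p m + μl) + (lam * p m / (lam * p m + μl)) * W 0 (m + 1))
    (hW4 : ∀ n m, 1 ≤ n → n + 1 ≤ m → m ≤ n₀ - 1 →
      W n m = 1 / (lam * p m + μl) + (lam * p m / (lam * p m + μl)) * W n (m + 1)
        + (μl / (lam * p m + μl)) * W (n - 1) (m - 1)) :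
    ∀ n m, n < m → m ≤ n₀ → W n m = ((n : ℝ) + 1) / μl := by

  intro n
  induction n using Nat.strong_induction_on with
  | _ n IHn =>
    have base : n < n₀ → W n n₀ = ((n : ℝ) + 1) / μl := by
      intro hnn
      rcases Nat.eq_zero_or_pos n with h0 | h1
      · subst h0; simpa using hW1
      · have hc : ((n - 1 : ℕ) : ℝ) = (n : ℝ) - 1 := by
          have h := Nat.cast_sub (R := ℝ) h1; simpa using h
        rw [hW2 n h1 (by omega),
          IHn (n - 1) (by omega) (n₀ - 1) (by omega) (by omega), hc]
        field_simp
        ring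
    have down : ∀ d m, n₀ - m ≤ d → n < m → m ≤ n₀ → W n m = ((n : ℝ) + 1) / μl := by
      intro d
      induction d with
      | zero =>
        intro m hd hnm hm
        have : m = n₀ := by omega
        subst this; exact base hnm
      | succ d IH =>
        intro m hd hnm hm
        by_cases hm' : m = n₀
        · subst hm'; exact base hnm
        · have ha : 0 ≤ lam * p m := mul_nonneg hlam.le (hp m).1
          have hs : 0 < lam * p m + μl := by linarith
          rcases Nat.eq_zero_or_pos n with h0 | h1
          · subst h0
            rw [hW3 m (by omega) (by omega),
              IH (m + 1) (by omega) (by omega) (by omega)]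
            push_cast
            field_simp
            ring
          · have hc : ((n - 1 : ℕ) : ℝ) = (n : ℝ) - 1 := by
              have h := Nat.cast_sub (R := ℝ) h1; simpa using h
            rw [hW4 n m h1 (by omega) (by omega),
              IH (m + 1) (by omega) (by omega) (by omega),
              IHn (n - 1) (by omega) (m - 1) (by omega) (by omega), hc]
            field_simp
            ring
    intro m hnm hm
    exact down (n₀ - m) m le_rfl hnm hm
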